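/- Let F : I → ℝ be twice differentiable on an open interval I containing [a,b] with a < b, and suppose F'' is integrable on [a,b]. Then (F(a)+F(b))/2 − (1/(b-a))·∫ₐᵇ F(x) dx = ((b-a)²/2)·∫₀¹ (t − t²)·F''(t·a+(1−t)·b) dt. -/

import Mathlib

open Set intervalIntegral

theorem trapezoid_identity (F F' F'' : ℝ → ℝ) (I : Set ℝ) (a b : ℝ)
    (hI : IsOpen I) (hab : a < b) (hsub : Icc a b ⊆ I)
    (hF' : ∀ x ∈ I, HasDerivAt F (F' x) x)
    (hF'' : ∀ x ∈ I, HasDerivAt F' (F'' x) x)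
    (hint : IntervalIntegrable F'' MeasureTheory.volume a b) :
    (F a + F b) / 2 - (1 / (b - a)) * ∫ x in a..b, F x =
      ((b - a) ^ 2 / 2) * ∫ t in (0:ℝ)..1, (t - t ^ 2) * F'' (t * a + (1 - t) * b) := by
  have hne : a - b ≠ 0 := by linarith
  set φ : ℝ → ℝ := fun t => (a - b) * t + b with hφdef
  have hrew : ∀ t : ℝ, t * a + (1 - t) * b = φ t := by intro t; simp [hφdef]; ring
  have hφ : ∀ t : ℝ, HasDerivAt φ (a - b) t := by
    intro t
    simpa [hφdef] using ((hasDerivAt_id t).const_mul (a - b)).add_const b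
  have hmem : ∀ t ∈ uIcc (0:ℝ) 1, φ t ∈ I := by
    intro t ht
    rw [uIcc_of_le (by norm_num : (0:ℝ) ≤ 1)] at ht
    apply hsub
    refine ⟨?_, ?_⟩ <;> · simp only [hφdef]; nlinarith [ht.1, ht.2]
  -- continuity of F' on the relevant set
  have hF'cont : ContinuousOn (fun t => (a - b) * F' (φ t)) (uIcc (0:ℝ) 1) := by
    apply ContinuousOn.mul continuousOn_const
    apply ContinuousOn.comp (t := I)
    · exact fun x hx => ((hF'' x hx).continuousAt.continuousWithinAt)
    · exact (by fun_prop : Continuous φ).continuousOn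
    · exact hmem
  -- integrability of F'' ∘ φ
  have hintc : IntervalIntegrable (fun t => (a - b) ^ 2 * F'' (φ t))
      MeasureTheory.volume (0:ℝ) 1 := by
    have h1 := (hint.comp_add_right b).comp_mul_left (c := a - b)
    simp only [div_self hne, sub_self, zero_div] at h1
    exact (h1.symm.const_mul _)
  -- first integration by parts
  have key1 : ∫ t in (0:ℝ)..1, (t - t ^ 2) * ((a - b) ^ 2 * F'' (φ t)) =
      - ∫ t in (0:ℝ)..1, (1 - 2 * t) * ((a - b) * F' (φ t)) := by
    have := integral_mul_deriv_eq_deriv_mul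
      (u := fun t => t - t ^ 2) (u' := fun t => 1 - 2 * t)
      (v := fun t => (a - b) * F' (φ t)) (v' := fun t => (a - b) ^ 2 * F'' (φ t))
      (a := (0:ℝ)) (b := 1)
      (fun t _ => by simpa using ((hasDerivAt_id' t).fun_sub (hasDerivAt_pow 2 t)))
      (fun t ht => by
        have := ((hF'' (φ t) (hmem t ht)).comp t (hφ t)).const_mul (a - b)
        convert this using 1; rfl; ring)
      (by apply Continuous.intervalIntegrable; continuity)
      hintc
    rw [this]; norm_num
  -- second integration by parts
  have key2 : ∫ t in (0:ℝ)..1, (1 - 2 * t) * ((a - b) * F' (φ t)) =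
      - F a - F b + 2 * ∫ t in (0:ℝ)..1, F (φ t) := by
    have := integral_mul_deriv_eq_deriv_mul
      (u := fun t => 1 - 2 * t) (u' := fun t => (-2 : ℝ))
      (v := fun t => F (φ t)) (v' := fun t => (a - b) * F' (φ t))
      (a := (0:ℝ)) (b := 1)
      (fun t _ => by simpa using ((hasDerivAt_id t).const_mul 2).const_sub 1)
      (fun t ht => by
        have := (hF' (φ t) (hmem t ht)).comp t (hφ t)
        convert this using 1; rfl; ring)
      (by apply Continuous.intervalIntegrable; continuity)
      (hF'cont.intervalIntegrable)
    rw [this]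
    have h1 : φ 1 = a := by simp [hφdef]
    have h0 : φ 0 = b := by simp [hφdef]
    simp only [h1, h0, intervalIntegral.integral_const_mul]
    ring
  -- substitution
  have key3 : ∫ t in (0:ℝ)..1, F (φ t) = (1 / (b - a)) * ∫ x in a..b, F x := by
    rw [hφdef]
    rw [intervalIntegral.integral_comp_mul_add F hne b]
    have : (a - b) * 0 + b = b := by ring
    rw [this, show (a - b) * 1 + b = a by ring, intervalIntegral.integral_symm a b,
      smul_eq_mul, show (a - b)⁻¹ = -(1 / (b - a)) by
        rw [← neg_sub b a, inv_neg, one_div]]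
    ring
  -- combine
  have hsplit : ∫ t in (0:ℝ)..1, (t - t ^ 2) * F'' (φ t) =
      ((a - b) ^ 2)⁻¹ * ∫ t in (0:ℝ)..1, (t - t ^ 2) * ((a - b) ^ 2 * F'' (φ t)) := by
    rw [show (fun t => (t - t ^ 2) * ((a - b) ^ 2 * F'' (φ t))) =
        (fun t => (a - b) ^ 2 * ((t - t ^ 2) * F'' (φ t))) from funext fun t => by ring]
    rw [intervalIntegral.integral_const_mul]
    field_simp
  simp only [hrew]
  rw [hsplit, key1, key2, key3]
  have hne2 : (a - b) ^ 2 ≠ 0 := pow_ne_zero _ hne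
  field_simp
  ring
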